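/- Let R be a commutative ring and A a commutative Hopf algebra over R with comultiplication Δ and antipode σ. Define Δ_γ : A → A ⊗_R A as the composite Δ_γ = (id_A ⊗ σ) ∘ τ ∘ Δ, where τ : A ⊗_R A → A ⊗_R A is the flip (so in Sweedler notation Δ_γ(f) = f₂ ⊗ σ(f₁)). Then an R-linear endomorphism ξ : A → A satisfies Δ_γ ∘ ξ = (ξ ⊗ id_A) ∘ Δ_γ if and only if it satisfies Δ ∘ ξ = (id_A ⊗ ξ) ∘ Δ. -/

import Mathlib

open TensorProduct

noncomputable section

variable (R A : Type*) [CommRing R] [CommRing A] [HopfAlgebra R A]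

/-- The coaction `Δ_γ = (id_A ⊗ σ) ∘ τ ∘ Δ`, where `τ` is the flip of the two tensor factors;
in Sweedler notation `Δ_γ(f) = f₂ ⊗ σ(f₁)`. -/
def deltaGamma : A →ₗ[R] A ⊗[R] A :=
  LinearMap.lTensor A (HopfAlgebra.antipode R : A →ₗ[R] A) ∘ₗ
    (TensorProduct.comm R A A).toLinearMap ∘ₗ Coalgebra.comul

namespace Statement6Aux

open LinearMap Coalgebra HopfAlgebra

/-- The map `x ⊗ (y ⊗ z) ↦ (x * y) ⊗ z`. -/
def psi : A ⊗[R] (A ⊗[R] A) →ₗ[R] A ⊗[R] A :=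
  (LinearMap.mul' R A).rTensor A ∘ₗ (TensorProduct.assoc R A A A).symm.toLinearMap

@[simp] lemma psi_tmul (x y z : A) :
    psi R A (x ⊗ₜ[R] (y ⊗ₜ[R] z)) = (x * y) ⊗ₜ[R] z := rfl

lemma psi_one (u : A ⊗[R] A) : psi R A ((1 : A) ⊗ₜ[R] u) = u := by
  induction u with
  | zero => rw [TensorProduct.tmul_zero, map_zero]
  | tmul y z => simp
  | add u v hu hv => rw [TensorProduct.tmul_add, map_add, hu, hv]

lemma psi_psi (a b : A) (u : A ⊗[R] A) :
    psi R A (a ⊗ₜ[R] psi R A (b ⊗ₜ[R] u)) = psi R A ((a * b) ⊗ₜ[R] u) := by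
  induction u with
  | zero => rw [TensorProduct.tmul_zero, map_zero, TensorProduct.tmul_zero, map_zero,
      TensorProduct.tmul_zero, map_zero]
  | tmul y z => simp [mul_assoc]
  | add u v hu hv => simp only [TensorProduct.tmul_add, map_add, hu, hv]

/-- The map `x ⊗ y ↦ Σ (x * y₁) ⊗ y₂`. -/
def phi : A ⊗[R] A →ₗ[R] A ⊗[R] A :=
  psi R A ∘ₗ (Coalgebra.comul (R := R) (A := A)).lTensor A

lemma phi_tmul (x y : A) :
    phi R A (x ⊗ₜ[R] y) = psi R A (x ⊗ₜ[R] (Coalgebra.comul (R := R) y)) := rfl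

lemma K0 : ((Algebra.linearMap R A) ∘ₗ (Coalgebra.counit : A →ₗ[R] R)).rTensor A ∘ₗ
    Coalgebra.comul = TensorProduct.mk R A A 1 := by
  rw [LinearMap.rTensor_comp, LinearMap.comp_assoc, Coalgebra.rTensor_counit_comp_comul]
  ext x
  simp

lemma aux1 : psi R A ∘ₗ (antipode (R := R) (A := A)).rTensor (A ⊗[R] A) =
    (LinearMap.mul' R A ∘ₗ (antipode (R := R) (A := A)).rTensor A).rTensor A ∘ₗ
      (TensorProduct.assoc R A A A).symm.toLinearMap := by
  ext x y z
  simp [psi]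

lemma K1 : phi R A ∘ₗ (antipode (R := R) (A := A)).rTensor A ∘ₗ Coalgebra.comul =
    TensorProduct.mk R A A 1 := by
  have h1 : phi R A ∘ₗ (antipode (R := R) (A := A)).rTensor A =
      (psi R A ∘ₗ (antipode (R := R) (A := A)).rTensor (A ⊗[R] A)) ∘ₗ
        (Coalgebra.comul (R := R) (A := A)).lTensor A := by
    rw [phi, LinearMap.comp_assoc, LinearMap.lTensor_comp_rTensor, ← LinearMap.rTensor_comp_lTensor,
      ← LinearMap.comp_assoc]
  calc phi R A ∘ₗ (antipode (R := R) (A := A)).rTensor A ∘ₗ Coalgebra.comul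
      = (phi R A ∘ₗ (antipode (R := R) (A := A)).rTensor A) ∘ₗ Coalgebra.comul := by
        rw [LinearMap.comp_assoc]
    _ = (psi R A ∘ₗ (antipode (R := R) (A := A)).rTensor (A ⊗[R] A)) ∘ₗ
          ((Coalgebra.comul (R := R) (A := A)).lTensor A ∘ₗ Coalgebra.comul) := by
        rw [h1, LinearMap.comp_assoc]
    _ = (LinearMap.mul' R A ∘ₗ (antipode (R := R) (A := A)).rTensor A).rTensor A ∘ₗ
          ((TensorProduct.assoc R A A A).symm.toLinearMap ∘ₗ
            (Coalgebra.comul (R := R) (A := A)).lTensor A ∘ₗ Coalgebra.comul) := by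
        rw [aux1, LinearMap.comp_assoc]
    _ = (LinearMap.mul' R A ∘ₗ (antipode (R := R) (A := A)).rTensor A).rTensor A ∘ₗ
          ((Coalgebra.comul (R := R) (A := A)).rTensor A ∘ₗ Coalgebra.comul) := by
        rw [Coalgebra.coassoc_symm]
    _ = ((LinearMap.mul' R A ∘ₗ (antipode (R := R) (A := A)).rTensor A) ∘ₗ
          Coalgebra.comul).rTensor A ∘ₗ Coalgebra.comul := by
        simp only [LinearMap.rTensor_comp, LinearMap.comp_assoc]
    _ = ((Algebra.linearMap R A) ∘ₗ (Coalgebra.counit : A →ₗ[R] R)).rTensor A ∘ₗ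
          Coalgebra.comul := by
        rw [LinearMap.comp_assoc, mul_antipode_rTensor_comul]
    _ = TensorProduct.mk R A A 1 := K0 R A

lemma aux2 : psi R A ∘ₗ (TensorProduct.mk R A A 1).lTensor A = LinearMap.id := by
  ext x y
  simp

lemma aux_lmk (ξ : A →ₗ[R] A) :
    ξ.lTensor A ∘ₗ TensorProduct.mk R A A 1 = TensorProduct.mk R A A 1 ∘ₗ ξ := by
  ext x
  simp

lemma phi_mk_one : phi R A ∘ₗ TensorProduct.mk R A A 1 = Coalgebra.comul := by
  refine LinearMap.ext fun x => ?_
  simp only [LinearMap.coe_comp, Function.comp_apply, TensorProduct.mk_apply]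
  rw [phi_tmul, psi_one]

lemma aux3 (ξ : A →ₗ[R] A) :
    psi R A ∘ₗ (phi R A ∘ₗ (antipode (R := R) (A := A)).rTensor A ∘ₗ ξ.lTensor A).lTensor A ∘ₗ
        (TensorProduct.assoc R A A A).toLinearMap =
      phi R A ∘ₗ ξ.lTensor A ∘ₗ
        (LinearMap.mul' R A ∘ₗ (antipode (R := R) (A := A)).lTensor A).rTensor A := by
  ext x y z
  simp only [LinearMap.coe_comp, Function.comp_apply, LinearEquiv.coe_coe,
    TensorProduct.AlgebraTensorModule.curry_apply, TensorProduct.curry_apply,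
    LinearMap.coe_restrictScalars, TensorProduct.assoc_tmul, LinearMap.lTensor_tmul,
    LinearMap.rTensor_tmul, LinearMap.mul'_apply, phi_tmul]
  exact psi_psi R A x (antipode (R := R) y) (Coalgebra.comul (ξ z))

lemma comm_lTensor (ξ : A →ₗ[R] A) :
    (TensorProduct.comm R A A).toLinearMap ∘ₗ ξ.lTensor A =
      ξ.rTensor A ∘ₗ (TensorProduct.comm R A A).toLinearMap := by
  ext x y
  simp

lemma deltaGamma_eq :
    (LinearMap.lTensor A (HopfAlgebra.antipode R : A →ₗ[R] A) ∘ₗ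
        (TensorProduct.comm R A A).toLinearMap ∘ₗ Coalgebra.comul : A →ₗ[R] A ⊗[R] A) =
      (TensorProduct.comm R A A).toLinearMap ∘ₗ
        (antipode (R := R) (A := A)).rTensor A ∘ₗ Coalgebra.comul := by
  have h : LinearMap.lTensor A (HopfAlgebra.antipode (R := R) (A := A)) ∘ₗ
      (TensorProduct.comm R A A).toLinearMap =
      (TensorProduct.comm R A A).toLinearMap ∘ₗ (antipode (R := R) (A := A)).rTensor A := by
    ext x y
    simp
  rw [← LinearMap.comp_assoc, h, LinearMap.comp_assoc]

lemma lTensor_rTensor_comm (f g : A →ₗ[R] A) :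
    f.lTensor A ∘ₗ g.rTensor A = g.rTensor A ∘ₗ f.lTensor A := by
  rw [LinearMap.lTensor_comp_rTensor, LinearMap.rTensor_comp_lTensor]

/-- The key cancellation: from `(σ ⊗ 1) ∘ Δ ∘ ξ = (σ ⊗ 1) ∘ (1 ⊗ ξ) ∘ Δ` we can deduce
`Δ ∘ ξ = (1 ⊗ ξ) ∘ Δ`. -/
lemma main_step (ξ : A →ₗ[R] A)
    (H : (antipode (R := R) (A := A)).rTensor A ∘ₗ Coalgebra.comul ∘ₗ ξ =
      (antipode (R := R) (A := A)).rTensor A ∘ₗ ξ.lTensor A ∘ₗ Coalgebra.comul) :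
    Coalgebra.comul (R := R) ∘ₗ ξ = ξ.lTensor A ∘ₗ Coalgebra.comul := by
  set σ := antipode (R := R) (A := A) with hσ
  set Δ := Coalgebra.comul (R := R) (A := A) with hΔ
  set C := phi R A ∘ₗ σ.rTensor A ∘ₗ ξ.lTensor A with hC
  have E1 : C ∘ₗ Δ = TensorProduct.mk R A A 1 ∘ₗ ξ := by
    calc C ∘ₗ Δ = phi R A ∘ₗ (σ.rTensor A ∘ₗ ξ.lTensor A ∘ₗ Δ) := by
          simp only [hC, LinearMap.comp_assoc]
      _ = phi R A ∘ₗ (σ.rTensor A ∘ₗ Δ ∘ₗ ξ) := by rw [← H]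
      _ = (phi R A ∘ₗ σ.rTensor A ∘ₗ Δ) ∘ₗ ξ := by simp only [LinearMap.comp_assoc]
      _ = TensorProduct.mk R A A 1 ∘ₗ ξ := by rw [K1]
  have Ta : psi R A ∘ₗ (C ∘ₗ Δ).lTensor A ∘ₗ Δ = ξ.lTensor A ∘ₗ Δ := by
    rw [E1, LinearMap.lTensor_comp, LinearMap.comp_assoc, ← LinearMap.comp_assoc _ _ (psi R A),
      aux2, LinearMap.id_comp]
  have Tb : psi R A ∘ₗ (C ∘ₗ Δ).lTensor A ∘ₗ Δ = Δ ∘ₗ ξ := by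
    calc psi R A ∘ₗ (C ∘ₗ Δ).lTensor A ∘ₗ Δ
        = psi R A ∘ₗ C.lTensor A ∘ₗ (Δ.lTensor A ∘ₗ Δ) := by
          simp only [LinearMap.lTensor_comp, LinearMap.comp_assoc]
      _ = psi R A ∘ₗ C.lTensor A ∘ₗ (TensorProduct.assoc R A A A).toLinearMap ∘ₗ
            Δ.rTensor A ∘ₗ Δ := by rw [← Coalgebra.coassoc]
      _ = (psi R A ∘ₗ C.lTensor A ∘ₗ (TensorProduct.assoc R A A A).toLinearMap) ∘ₗ
            Δ.rTensor A ∘ₗ Δ := by simp only [LinearMap.comp_assoc]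
      _ = (phi R A ∘ₗ ξ.lTensor A ∘ₗ
            (LinearMap.mul' R A ∘ₗ σ.lTensor A).rTensor A) ∘ₗ Δ.rTensor A ∘ₗ Δ := by
          rw [hC, aux3]
      _ = phi R A ∘ₗ ξ.lTensor A ∘ₗ
            ((LinearMap.mul' R A ∘ₗ σ.lTensor A ∘ₗ Δ).rTensor A ∘ₗ Δ) := by
          simp only [LinearMap.rTensor_comp, LinearMap.comp_assoc]
      _ = phi R A ∘ₗ ξ.lTensor A ∘ₗ
            (((Algebra.linearMap R A) ∘ₗ (Coalgebra.counit : A →ₗ[R] R)).rTensor A ∘ₗ Δ) := by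
          rw [hσ, hΔ, mul_antipode_lTensor_comul]
      _ = phi R A ∘ₗ ξ.lTensor A ∘ₗ TensorProduct.mk R A A 1 := by rw [hΔ, K0]
      _ = phi R A ∘ₗ TensorProduct.mk R A A 1 ∘ₗ ξ := by rw [aux_lmk]
      _ = Δ ∘ₗ ξ := by rw [← LinearMap.comp_assoc, phi_mk_one]
  rw [← Tb, Ta]

end Statement6Aux

/-- **Theorem (cf. Ardakov, proof of Proposition "LieTriangle": (\ref{DeltaRhoL}) ⟺
(\ref{WaterhouseInvDefn})).**
Let `A` be a commutative Hopf algebra over a commutative ring `R` with comultiplication `Δ`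
and antipode `σ`, and let `Δ_γ := (id_A ⊗ σ) ∘ τ ∘ Δ` where `τ` is the flip.  Then an
`R`-linear endomorphism `ξ : A → A` satisfies `Δ_γ ∘ ξ = (ξ ⊗ id_A) ∘ Δ_γ` if and only if it
satisfies `Δ ∘ ξ = (id_A ⊗ ξ) ∘ Δ`. -/
theorem statement6 (ξ : A →ₗ[R] A) :
    deltaGamma R A ∘ₗ ξ = LinearMap.rTensor A ξ ∘ₗ deltaGamma R A ↔
      Coalgebra.comul (R := R) ∘ₗ ξ = LinearMap.lTensor A ξ ∘ₗ Coalgebra.comul := by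
  open Statement6Aux HopfAlgebra in
  have hδ : deltaGamma R A = (TensorProduct.comm R A A).toLinearMap ∘ₗ
      (antipode (R := R) (A := A)).rTensor A ∘ₗ Coalgebra.comul := deltaGamma_eq R A
  have hiff : (deltaGamma R A ∘ₗ ξ = LinearMap.rTensor A ξ ∘ₗ deltaGamma R A) ↔
      ((antipode (R := R) (A := A)).rTensor A ∘ₗ Coalgebra.comul ∘ₗ ξ =
        (antipode (R := R) (A := A)).rTensor A ∘ₗ ξ.lTensor A ∘ₗ Coalgebra.comul) := by
    rw [hδ]
    rw [show LinearMap.rTensor A ξ ∘ₗ (TensorProduct.comm R A A).toLinearMap ∘ₗ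
        (antipode (R := R) (A := A)).rTensor A ∘ₗ Coalgebra.comul =
        (TensorProduct.comm R A A).toLinearMap ∘ₗ
          ((antipode (R := R) (A := A)).rTensor A ∘ₗ ξ.lTensor A ∘ₗ Coalgebra.comul) from by
      rw [← LinearMap.comp_assoc, ← comm_lTensor, LinearMap.comp_assoc]
      congr 1
      rw [← LinearMap.comp_assoc, lTensor_rTensor_comm, LinearMap.comp_assoc]]
    rw [LinearMap.comp_assoc, LinearMap.comp_assoc]
    exact LinearMap.cancel_left (TensorProduct.comm R A A).injective
  rw [hiff]
  constructor
  · exact main_step R A ξ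
  · intro h
    rw [h]

end
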